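/- arXiv:1603.05433 — 2 statements merged into one kernel-verified Lean document; each statement's English description precedes it below -/
import Mathlib

section
/- Let m, k, l be natural numbers with k + l < m − 1, and let C_{j,h}(m,k,l) be the coefficients of the dual constrained Bernstein basis in the Bernstein basis, D_j^{(m,k,l)} = Σ_{h=k+1}^{m−l−1} C_{j,h} Bᵐ_h. Then C_{k+1,m−l−1} = C(m,k+1)^{-1} C(m,l+1)^{-1} · (−1)^{m−k−l−2} (m+k+l+3)! / ((m−k−l−2)! (2k+2)! (2l+2)!). -/
open Finset intervalIntegral Polynomial

lemma beta_nat (a b : ℕ) : (∫ u in (0:ℝ)..1, u ^ a * (1 - u) ^ b)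
    = (a.factorial : ℝ) * b.factorial / (a + b + 1).factorial := by
  induction b generalizing a with
  | zero =>
    simp [integral_pow]
    have h : (1+(a:ℝ)) ≠ 0 := by positivity
    field_simp
    rw [Nat.factorial_succ]
    push_cast; ring
  | succ b ih =>
    have key : (∫ u in (0:ℝ)..1,
        ((a+1:ℝ) * (u ^ a * (1-u)^(b+1)) - (b+1:ℝ) * (u^(a+1) * (1-u)^b)))
        = 0 := by
      have hd : ∀ x ∈ Set.uIcc (0:ℝ) 1, HasDerivAt (fun u : ℝ => u^(a+1) * (1-u)^(b+1))
          ((a+1:ℝ) * (x ^ a * (1-x)^(b+1)) - (b+1:ℝ) * (x^(a+1) * (1-x)^b)) x := by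
        intro x _
        have h1 : HasDerivAt (fun u : ℝ => u^(a+1)) ((a+1:ℝ) * x^a) x := by
          simpa using hasDerivAt_pow (a+1) x
        have h2 : HasDerivAt (fun u : ℝ => (1-u)^(b+1)) (-((b+1:ℝ) * (1-x)^b)) x := by
          have := ((hasDerivAt_id x).const_sub 1).fun_pow (b+1)
          simpa [mul_comm, mul_assoc] using this
        simpa [mul_comm, mul_assoc, mul_left_comm] using (h1.fun_mul h2).congr_deriv (by ring)
      rw [integral_eq_sub_of_hasDerivAt hd (by apply Continuous.intervalIntegrable; continuity)]
      norm_num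
    rw [intervalIntegral.integral_sub, intervalIntegral.integral_const_mul,
      intervalIntegral.integral_const_mul] at key
    · have h2 := ih (a+1)
      have hne : (a+1:ℝ) ≠ 0 := by positivity
      have : (∫ u in (0:ℝ)..1, u ^ a * (1-u)^(b+1))
          = (b+1:ℝ)/(a+1:ℝ) * ((a+1).factorial * b.factorial / (a+1+b+1).factorial) := by
        rw [← h2]; field_simp at key ⊢; linarith [key]
      rw [this]
      rw [Nat.factorial_succ b, Nat.factorial_succ a]
      have hfa : ((a + (b+1) + 1).factorial : ℝ) = ((a+1+b+1).factorial : ℝ) := by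
        norm_num; ring_nf
      rw [hfa]
      have hne2 : ((a+1+b+1).factorial : ℝ) ≠ 0 := by positivity
      field_simp
      push_cast
      ring
    · apply Continuous.intervalIntegrable; continuity
    · apply Continuous.intervalIntegrable; continuity

open scoped fwdDiff

lemma fwdDiff_asc (n : ℕ) : ∀ i a : ℕ, i ≤ n →
    (fwdDiff (1:ℕ))^[n] (fun p : ℕ => ((a + p).ascFactorial i : ℝ))
      = fun _ => if i = n then (n.factorial : ℝ) else 0 := by
  induction n with
  | zero =>
    intro i a hi
    interval_cases i
    simp [Nat.ascFactorial_zero]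
  | succ n IH =>
    intro i a hi
    rw [Function.iterate_succ_apply]
    match i with
    | 0 =>
      have h0 : fwdDiff (1:ℕ) (fun p : ℕ => ((a + p).ascFactorial 0 : ℝ)) = fun _ => 0 := by
        funext p; simp [fwdDiff, Nat.ascFactorial_zero]
      rw [h0]
      have : (fwdDiff (1:ℕ))^[n] (fun _ : ℕ => (0:ℝ)) = fun _ => 0 := by
        apply Function.iterate_fixed
        funext p; simp [fwdDiff]
      rw [this]
      funext p
      simp [Nat.succ_ne_zero]
    | j + 1 =>
      have hstep : fwdDiff (1:ℕ) (fun p : ℕ => ((a + p).ascFactorial (j+1) : ℝ))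
          = fun p : ℕ => ((j:ℝ) + 1) * (((a+1) + p).ascFactorial j : ℝ) := by
        funext p
        simp only [fwdDiff]
        have h1 : (a + (p+1)).ascFactorial (j+1) = (a + p + 1 + j) * (a + p + 1).ascFactorial j := by
          rw [show a + (p+1) = a + p + 1 from rfl, Nat.ascFactorial_succ]
        have h2 : (a + p) * (a + p + 1).ascFactorial j = (a + p + j) * (a + p).ascFactorial j :=
          Nat.succ_ascFactorial (a+p) j
        have h3 : (a + p).ascFactorial (j+1) = (a + p + j) * (a + p).ascFactorial j :=
          Nat.ascFactorial_succ
        have h4 : ((a+1) + p) = (a + p + 1) := by omega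
        rw [h1, h3, h4]
        push_cast [← h2]
        ring
      rw [hstep]
      have hsmul : (fun p : ℕ => ((j:ℝ) + 1) * (((a+1) + p).ascFactorial j : ℝ))
          = ((j:ℝ) + 1) • (fun p : ℕ => (((a+1) + p).ascFactorial j : ℝ)) := by
        funext p; simp
      rw [hsmul, fwdDiff_iter_const_smul, IH j (a+1) (by omega)]
      funext p
      simp only [Pi.smul_apply, smul_eq_mul]
      by_cases hj : j = n
      · subst hj
        simp [Nat.factorial_succ]
      · simp [hj]

lemma alt_sum (n i a : ℕ) (hi : i ≤ n) :
    ∑ p ∈ Finset.range (n+1),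
        (-1:ℝ)^(n-p) * (n.choose p) * ((a + p).ascFactorial i : ℝ)
      = if i = n then (n.factorial : ℝ) else 0 := by
  have h := fwdDiff_iter_eq_sum_shift (1:ℕ) (fun p : ℕ => ((a + p).ascFactorial i : ℝ)) n 0
  rw [fwdDiff_asc n i a hi] at h
  have h2 : ∑ kk ∈ Finset.range (n+1), ((-1:ℤ)^(n-kk) * (n.choose kk)) • ((a + (0 + kk • 1)).ascFactorial i : ℝ)
      = if i = n then (n.factorial : ℝ) else 0 := h.symm
  rw [← h2]
  apply Finset.sum_congr rfl
  intro p _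
  rw [zsmul_eq_mul]
  push_cast
  ring_nf

set_option maxHeartbeats 1000000 in
theorem dual_basis_coeff_corner (m k l : ℕ) (hklm : k + l + 1 < m)
    (D : ℕ → Polynomial ℝ) (C : ℕ → ℕ → ℝ)
    (hmem : ∀ j ∈ Finset.Icc (k + 1) (m - l - 1),
      D j ∈ Submodule.span ℝ
        ((fun i => bernsteinPolynomial ℝ m i) '' Set.Icc (k + 1) (m - l - 1)))
    (hdual : ∀ j ∈ Finset.Icc (k + 1) (m - l - 1), ∀ h ∈ Finset.Icc (k + 1) (m - l - 1),
      (∫ u in (0:ℝ)..1, (D j).eval u * (bernsteinPolynomial ℝ m h).eval u)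
        = if j = h then 1 else 0)
    (hC : ∀ j ∈ Finset.Icc (k + 1) (m - l - 1),
      D j = ∑ h ∈ Finset.Icc (k + 1) (m - l - 1), C j h • bernsteinPolynomial ℝ m h) :
    C (k + 1) (m - l - 1)
      = ((m.choose (k + 1) : ℝ))⁻¹ * ((m.choose (l + 1) : ℝ))⁻¹ *
          ((-1 : ℝ) ^ (m - k - l - 2) * ((m + k + l + 3).factorial : ℝ) /
            (((m - k - l - 2).factorial : ℝ) * ((2 * k + 2).factorial : ℝ) *
              ((2 * l + 2).factorial : ℝ))) := by
  clear hmem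
  obtain ⟨n, rfl⟩ : ∃ n, m = n + (k + l + 2) := ⟨m - (k+l+2), by omega⟩
  set M := n + (k + l + 2) with hM
  have hsub1 : M - l - 1 = n + k + 1 := by omega
  have hsub2 : M - k - l - 2 = n := by omega
  rw [hsub1] at hdual hC ⊢
  rw [hsub2]
  have hk1 : k + 1 ∈ Finset.Icc (k+1) (n+k+1) := by simp
  -- bernstein evaluation
  have hbe : ∀ (j : ℕ) (u : ℝ), (bernsteinPolynomial ℝ M j).eval u
      = (M.choose j : ℝ) * u^j * (1-u)^(M-j) := by
    intro j u; simp [bernsteinPolynomial]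
  -- Step A : value of the integral against pure monomial tests, via hdual
  have hA : ∀ p ≤ n, (∫ u in (0:ℝ)..1, (D (k+1)).eval u * (u^(k+1+p) * (1-u)^(l+1)))
      = if p = 0 then ((M.choose (k+1) : ℝ))⁻¹ else 0 := by
    intro p hp
    have hpt : ∀ u : ℝ, (D (k+1)).eval u * (u^(k+1+p) * (1-u)^(l+1))
        = ∑ q ∈ Finset.range (n - p + 1),
            (((n-p).choose q : ℝ) / (M.choose (k+1+p+q) : ℝ))
              * ((D (k+1)).eval u * (bernsteinPolynomial ℝ M (k+1+p+q)).eval u) := by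
      intro u
      have hone : ∑ q ∈ Finset.range (n-p+1),
          u^q * (1-u)^(n-p-q) * ((n-p).choose q : ℝ) = 1 := by
        have h := add_pow u (1-u) (n-p)
        simpa using h.symm
      have hterm : ∀ q ∈ Finset.range (n-p+1),
          (((n-p).choose q : ℝ) / (M.choose (k+1+p+q) : ℝ))
              * ((D (k+1)).eval u * (bernsteinPolynomial ℝ M (k+1+p+q)).eval u)
          = ((D (k+1)).eval u * (u^(k+1+p) * (1-u)^(l+1)))
              * (u^q * (1-u)^(n-p-q) * ((n-p).choose q : ℝ)) := by
        intro q hq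
        simp only [Finset.mem_range] at hq
        have hch : (M.choose (k+1+p+q) : ℝ) ≠ 0 := by
          have : 0 < M.choose (k+1+p+q) := Nat.choose_pos (by omega)
          exact_mod_cast this.ne'
        rw [hbe]
        rw [show M - (k+1+p+q) = (l+1) + (n-p-q) by omega,
          show k+1+p+q = (k+1+p) + q from rfl, pow_add, pow_add]
        field_simp
        ring
      rw [Finset.sum_congr rfl hterm, ← Finset.mul_sum, hone, mul_one]
    rw [intervalIntegral.integral_congr (g := fun u =>
        ∑ q ∈ Finset.range (n - p + 1),
          (((n-p).choose q : ℝ) / (M.choose (k+1+p+q) : ℝ))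
            * ((D (k+1)).eval u * (bernsteinPolynomial ℝ M (k+1+p+q)).eval u))
      (fun u _ => hpt u)]
    rw [intervalIntegral.integral_finset_sum (fun q _ => by
      apply Continuous.intervalIntegrable
      exact continuous_const.mul ((D (k+1)).continuous.mul
        (bernsteinPolynomial ℝ M (k+1+p+q)).continuous))]
    rw [Finset.sum_congr rfl (fun q _ => intervalIntegral.integral_const_mul _ _)]
    have hval : ∀ q ∈ Finset.range (n-p+1),
        (((n-p).choose q : ℝ) / (M.choose (k+1+p+q) : ℝ))
            * (∫ u in (0:ℝ)..1, (D (k+1)).eval u * (bernsteinPolynomial ℝ M (k+1+p+q)).eval u)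
        = if p + q = 0 then ((M.choose (k+1) : ℝ))⁻¹ else 0 := by
      intro q hq
      simp only [Finset.mem_range] at hq
      rw [hdual (k+1) hk1 (k+1+p+q) (by simp; omega)]
      by_cases h0 : p + q = 0
      · rw [if_pos (by omega), if_pos h0, mul_one]
        have h1 : p = 0 := by omega
        have h2 : q = 0 := by omega
        subst h1; subst h2
        simp
      · rw [if_neg (by omega), if_neg h0, mul_zero]
    rw [Finset.sum_congr rfl hval]
    by_cases hp0 : p = 0
    · subst hp0
      rw [Finset.sum_eq_single_of_mem 0 (Finset.mem_range.mpr (by omega))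
        (fun q _ hq => by rw [if_neg (by omega)])]
    · rw [Finset.sum_eq_zero (fun q _ => by rw [if_neg (by omega)]), if_neg hp0]
  -- Step B : value of the same integrals via hC and the beta integral
  have hB : ∀ p : ℕ, (∫ u in (0:ℝ)..1, (D (k+1)).eval u * (u^(k+1+p) * (1-u)^(l+1)))
      = ∑ i ∈ Finset.range (n+1),
          C (k+1) (k+1+i) * (M.choose (k+1+i) : ℝ) *
            (((2*k+2+i+p).factorial : ℝ) * ((2*l+2+(n-i)).factorial : ℝ)
              / ((2*k+2*l+n+5+p).factorial : ℝ)) := by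
    intro p
    rw [hC (k+1) hk1]
    have hpt : ∀ u : ℝ,
        ((∑ h ∈ Finset.Icc (k+1) (n+k+1), C (k+1) h • bernsteinPolynomial ℝ M h).eval u)
            * (u^(k+1+p)*(1-u)^(l+1))
        = ∑ h ∈ Finset.Icc (k+1) (n+k+1),
            C (k+1) h * ((bernsteinPolynomial ℝ M h).eval u * (u^(k+1+p)*(1-u)^(l+1))) := by
      intro u
      rw [Polynomial.eval_finset_sum, Finset.sum_mul]
      exact Finset.sum_congr rfl fun h _ => by rw [Polynomial.eval_smul, smul_eq_mul]; ring
    rw [intervalIntegral.integral_congr (g := fun u =>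
        ∑ h ∈ Finset.Icc (k+1) (n+k+1),
          C (k+1) h * ((bernsteinPolynomial ℝ M h).eval u * (u^(k+1+p)*(1-u)^(l+1))))
      (fun u _ => hpt u)]
    rw [intervalIntegral.integral_finset_sum (fun h _ => by
      apply Continuous.intervalIntegrable
      exact continuous_const.mul ((bernsteinPolynomial ℝ M h).continuous.mul
        (by continuity)))]
    rw [← Finset.Ico_add_one_right_eq_Icc, Finset.sum_Ico_eq_sum_range,
      show n+k+1+1 - (k+1) = n+1 by omega]
    apply Finset.sum_congr rfl
    intro i hi
    simp only [Finset.mem_range] at hi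
    rw [show k+1+i = (k+1)+i from rfl]
    rw [intervalIntegral.integral_const_mul]
    have hptt : ∀ u : ℝ, (bernsteinPolynomial ℝ M (k+1+i)).eval u * (u^(k+1+p)*(1-u)^(l+1))
        = (M.choose (k+1+i):ℝ) * (u^(2*k+2+i+p) * (1-u)^(2*l+2+(n-i))) := by
      intro u
      rw [hbe]
      rw [show 2*k+2+i+p = (k+1+i)+(k+1+p) by ring, pow_add,
        show 2*l+2+(n-i) = (M-(k+1+i)) + (l+1) by omega, pow_add]
      ring
    rw [intervalIntegral.integral_congr (g := fun u =>
        (M.choose (k+1+i):ℝ) * (u^(2*k+2+i+p) * (1-u)^(2*l+2+(n-i))))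
      (fun u _ => hptt u)]
    rw [intervalIntegral.integral_const_mul, beta_nat]
    rw [show (2*k+2+i+p) + (2*l+2+(n-i)) + 1 = 2*k+2*l+n+5+p by omega]
    ring
  -- the combination coefficients
  set r : ℕ → ℝ := fun p => (-1:ℝ)^(n-p) * (n.choose p) * ((2*k+2*l+n+5+p).factorial : ℝ)
      / ((n.factorial : ℝ) * ((2*l+2).factorial : ℝ) * ((2*k+2+p).factorial : ℝ)) with hr
  -- way 1
  have hS1 : ∑ p ∈ Finset.range (n+1),
      r p * (∫ u in (0:ℝ)..1, (D (k+1)).eval u * (u^(k+1+p) * (1-u)^(l+1)))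
      = r 0 * ((M.choose (k+1) : ℝ))⁻¹ := by
    rw [Finset.sum_congr rfl (fun p hp => by
      rw [hA p (by simp only [Finset.mem_range] at hp; omega)])]
    rw [Finset.sum_eq_single_of_mem 0 (by simp)]
    · simp
    · intro q _ hq; rw [if_neg hq, mul_zero]
  -- inner sum evaluation
  have hinner : ∀ i ≤ n, ∑ p ∈ Finset.range (n+1),
      r p * (((2*k+2+i+p).factorial : ℝ) * ((2*l+2+(n-i)).factorial : ℝ)
        / ((2*k+2*l+n+5+p).factorial : ℝ))
      = if i = n then 1 else 0 := by
    intro i hi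
    have key := alt_sum n i (2*k+3) hi
    have step : ∀ p, r p * (((2*k+2+i+p).factorial : ℝ) * ((2*l+2+(n-i)).factorial : ℝ)
        / ((2*k+2*l+n+5+p).factorial : ℝ))
        = (((2*l+2+(n-i)).factorial : ℝ) / ((n.factorial : ℝ) * ((2*l+2).factorial : ℝ)))
          * ((-1:ℝ)^(n-p) * (n.choose p) * (((2*k+3+p).ascFactorial i : ℝ))) := by
      intro p
      have hfact : ((2*k+2+p).factorial : ℝ) * ((2*k+3+p).ascFactorial i : ℝ)
          = ((2*k+2+i+p).factorial : ℝ) := by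
        have := Nat.factorial_mul_ascFactorial (2*k+2+p) i
        rw [show 2*k+2+p+1 = 2*k+3+p by ring, show 2*k+2+p+i = 2*k+2+i+p by ring] at this
        exact_mod_cast this
      rw [hr]
      have h1 : ((n.factorial : ℝ)) ≠ 0 := by positivity
      have h2 : (((2*l+2).factorial : ℝ)) ≠ 0 := by positivity
      have h3 : (((2*k+2+p).factorial : ℝ)) ≠ 0 := by positivity
      have h4 : (((2*k+2*l+n+5+p).factorial : ℝ)) ≠ 0 := by positivity
      field_simp
      rw [← hfact]
      ring
    rw [Finset.sum_congr rfl (fun p _ => step p), ← Finset.mul_sum, key]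
    by_cases hin : i = n
    · rw [if_pos hin, if_pos hin, hin, Nat.sub_self, Nat.add_zero]
      have h1 : ((n.factorial : ℝ)) ≠ 0 := by positivity
      have h2 : (((2*l+2).factorial : ℝ)) ≠ 0 := by positivity
      field_simp
    · rw [if_neg hin, if_neg hin, mul_zero]
  -- way 2
  have hS2 : ∑ p ∈ Finset.range (n+1),
      r p * (∫ u in (0:ℝ)..1, (D (k+1)).eval u * (u^(k+1+p) * (1-u)^(l+1)))
      = C (k+1) (k+1+n) * (M.choose (k+1+n) : ℝ) := by
    have e1 : ∀ p ∈ Finset.range (n+1),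
        r p * (∫ u in (0:ℝ)..1, (D (k+1)).eval u * (u^(k+1+p) * (1-u)^(l+1)))
        = ∑ i ∈ Finset.range (n+1),
            C (k+1) (k+1+i) * (M.choose (k+1+i) : ℝ) *
              (r p * (((2*k+2+i+p).factorial : ℝ) * ((2*l+2+(n-i)).factorial : ℝ)
                / ((2*k+2*l+n+5+p).factorial : ℝ))) := by
      intro p _
      rw [hB p, Finset.mul_sum]
      exact Finset.sum_congr rfl fun i _ => by ring
    rw [Finset.sum_congr rfl e1, Finset.sum_comm]
    have e2 : ∀ i ∈ Finset.range (n+1),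
        (∑ p ∈ Finset.range (n+1),
            C (k+1) (k+1+i) * (M.choose (k+1+i) : ℝ) *
              (r p * (((2*k+2+i+p).factorial : ℝ) * ((2*l+2+(n-i)).factorial : ℝ)
                / ((2*k+2*l+n+5+p).factorial : ℝ))))
        = C (k+1) (k+1+i) * (M.choose (k+1+i) : ℝ) * (if i = n then 1 else 0) := by
      intro i hi
      simp only [Finset.mem_range] at hi
      rw [← Finset.mul_sum, hinner i (by omega)]
    rw [Finset.sum_congr rfl e2]
    rw [Finset.sum_eq_single_of_mem n (Finset.mem_range.mpr (by omega))
      (fun q _ hq => by rw [if_neg hq, mul_zero]), if_pos rfl, mul_one]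
  rw [hS1] at hS2
  -- final algebra
  have hcs : (M.choose (k+1+n) : ℝ) = (M.choose (l+1) : ℝ) := by
    norm_cast
    rw [show k+1+n = M - (l+1) by omega]
    exact Nat.choose_symm (by omega)
  have hck : (M.choose (k+1) : ℝ) ≠ 0 := by
    have : 0 < M.choose (k+1) := Nat.choose_pos (by omega)
    exact_mod_cast this.ne'
  have hcl : (M.choose (l+1) : ℝ) ≠ 0 := by
    have : 0 < M.choose (l+1) := Nat.choose_pos (by omega)
    exact_mod_cast this.ne'
  rw [hcs] at hS2
  rw [show n+k+1 = k+1+n by ring]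
  rw [show M + k + l + 3 = 2*k+2*l+n+5 by omega]
  have hr0 : r 0 = (-1:ℝ)^n * ((2*k+2*l+n+5).factorial : ℝ)
      / ((n.factorial : ℝ) * ((2*l+2).factorial : ℝ) * ((2*k+2).factorial : ℝ)) := by
    rw [hr]
    norm_num
  have hC2 : C (k+1) (k+1+n)
      = r 0 * ((M.choose (k+1) : ℝ))⁻¹ / ((M.choose (l+1) : ℝ)) := by
    rw [eq_div_iff hcl]
    linarith [hS2]
  rw [hC2, hr0]
  have h1 : ((n.factorial : ℝ)) ≠ 0 := by positivity
  have h2 : (((2*l+2).factorial : ℝ)) ≠ 0 := by positivity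
  have h3 : (((2*k+2).factorial : ℝ)) ≠ 0 := by positivity
  field_simp
end

section
/- Let n, m, r, d be natural numbers with r ≤ m ≤ n, let p₀,…,pₙ ∈ ℝᵈ and q₀,…,qₘ ∈ ℝᵈ, and set P(u) = Σ_{i=0}^{n} pᵢ Bⁿᵢ(u), Q(u) = Σ_{j=0}^{m} qⱼ Bᵐⱼ(u). Then the derivatives of Q and P agree at u = 1 up to order r, i.e., Q⁽ʲ⁾(1) = P⁽ʲ⁾(1) for j = 0,1,…,r, if and only if for each j = 0,1,…,r: q_{m−j} = (−1)ʲ C(n,j) C(m,j)^{-1} Δʲ p_{n−j} − Σ_{h=1}^{j} (−1)ʰ C(j,h) q_{m−j+h}, where Δʲ denotes the iterated forward difference on the control points. -/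
open Finset intervalIntegral

/-- The Bernstein basis polynomial `B^n_j(u) = C(n,j) u^j (1-u)^(n-j)`. -/
noncomputable def bern (n j : ℕ) (u : ℝ) : ℝ := (n.choose j : ℝ) * u ^ j * (1 - u) ^ (n - j)

/-- Iterated forward difference `Δ^j α_k` acting on the indices of control points. -/
noncomputable def fdiffE (d : ℕ) : ℕ → (ℕ → EuclideanSpace ℝ (Fin d)) → ℕ → EuclideanSpace ℝ (Fin d)
  | 0, w, k => w k
  | j + 1, w, k => fdiffE d j w (k + 1) - fdiffE d j w k

/-- The Bernstein basis polynomial as a polynomial. -/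
noncomputable def bp (n j : ℕ) : Polynomial ℝ :=
  Polynomial.C (n.choose j : ℝ) * (Polynomial.X ^ j * (1 - Polynomial.X) ^ (n - j))

lemma bern_eq (n j : ℕ) (u : ℝ) : bern n j u = (bp n j).eval u := by
  simp [bern, bp, mul_assoc]

/-- `fdiffE` agrees with mathlib's `fwdDiff`. -/
lemma fdiffE_eq_fwdDiff (d j : ℕ) (w : ℕ → EuclideanSpace ℝ (Fin d)) (k : ℕ) :
    fdiffE d j w k = (fwdDiff 1)^[j] w k := by
  induction j generalizing k with
  | zero => simp [fdiffE]
  | succ j ih =>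
    rw [Function.iterate_succ_apply']
    simp only [fdiffE, fwdDiff, ih]

/-- Alternating-sum expansion of the iterated forward difference. -/
lemma fdiffE_eq_sum (d j : ℕ) (w : ℕ → EuclideanSpace ℝ (Fin d)) (k : ℕ) :
    fdiffE d j w k
      = ∑ h ∈ range (j + 1), ((-1 : ℝ) ^ (j - h) * (j.choose h : ℝ)) • w (k + h) := by
  rw [fdiffE_eq_fwdDiff, fwdDiff_iter_eq_sum_shift]
  refine Finset.sum_congr rfl fun h _ => ?_
  have : ((((-1 : ℤ) ^ (j - h) * (j.choose h : ℤ) : ℤ) : ℝ)) • w (k + h • 1)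
      = ((-1 : ℝ) ^ (j - h) * (j.choose h : ℝ)) • w (k + h) := by
    push_cast
    simp [smul_eq_mul]
  rw [← this, Int.cast_smul_eq_zsmul]

/-- Iterated derivatives of a vector-valued polynomial combination. -/
lemma iteratedDeriv_poly_sum (d : ℕ) (s : Finset ℕ) (v : ℕ → EuclideanSpace ℝ (Fin d))
    (j : ℕ) (P : ℕ → Polynomial ℝ) :
    iteratedDeriv j (fun u : ℝ => ∑ i ∈ s, (P i).eval u • v i)
      = fun u => ∑ i ∈ s, ((Polynomial.derivative^[j] (P i)).eval u) • v i := by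
  induction j generalizing P with
  | zero => simp
  | succ j ih =>
    rw [iteratedDeriv_succ']
    have hd : deriv (fun u : ℝ => ∑ i ∈ s, (P i).eval u • v i)
        = fun u => ∑ i ∈ s, ((P i).derivative.eval u) • v i := by
      funext u
      rw [deriv_fun_sum (fun i _ => ((P i).differentiableAt).smul_const (v i))]
      refine Finset.sum_congr rfl fun i _ => ?_
      rw [deriv_smul_const ((P i).differentiableAt), Polynomial.deriv]
    rw [hd, ih (fun i => (P i).derivative)]
    funext u
    refine Finset.sum_congr rfl fun i _ => ?_
    rw [Function.iterate_succ_apply]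

lemma signMulA (a b : ℕ) (hb : b ≤ a) : (-1 : ℝ) ^ a * (-1 : ℝ) ^ (a - b) = (-1 : ℝ) ^ b := by
  rw [← pow_add, show a + (a - b) = 2 * (a - b) + b from by omega, pow_add, pow_mul, neg_one_sq,
    one_pow, one_mul]

lemma signMulB (a b : ℕ) (hb : b ≤ a) : (-1 : ℝ) ^ a * (-1 : ℝ) ^ b = (-1 : ℝ) ^ (a - b) := by
  rw [← pow_add, show a + b = 2 * b + (a - b) from by omega, pow_add, pow_mul, neg_one_sq,
    one_pow, one_mul]

lemma eval1_one_sub_pow (s b : ℕ) :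
    (Polynomial.derivative^[b] ((1 - Polynomial.X : Polynomial ℝ) ^ s)).eval 1
      = if b = s then ((-1 : ℝ) ^ s * (s.factorial : ℝ)) else 0 := by
  have h1 : ((1 - Polynomial.X : Polynomial ℝ)) ^ s
      = Polynomial.C ((-1 : ℝ) ^ s) * (Polynomial.X - Polynomial.C 1) ^ s := by
    rw [Polynomial.C_pow, ← mul_pow]
    congr 1
    rw [Polynomial.C_neg, Polynomial.C_1]
    ring
  rw [h1, Polynomial.iterate_derivative_C_mul, Polynomial.iterate_derivative_X_sub_pow]
  simp only [Polynomial.eval_mul, Polynomial.eval_C, Polynomial.eval_smul,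
    Polynomial.eval_pow, Polynomial.eval_sub, Polynomial.eval_X, sub_self, smul_eq_mul,
    nsmul_eq_mul]
  rcases lt_trichotomy b s with h | h | h
  · rw [if_neg (by omega), zero_pow (by omega)]
    ring
  · subst h
    rw [if_pos rfl, Nat.sub_self, pow_zero, Nat.descFactorial_self, Polynomial.eval_natCast]
    ring
  · rw [if_neg (by omega), Nat.descFactorial_eq_zero_iff_lt.2 h]
    simp

lemma eval1_bp (m i j : ℕ) :
    (Polynomial.derivative^[j] (bp m i)).eval 1
      = if m - i ≤ j then
          ((m.choose i : ℝ) * (j.choose (m - i) : ℝ) * (i.descFactorial (j - (m - i)) : ℝ)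
            * ((-1 : ℝ) ^ (m - i) * ((m - i).factorial : ℝ)))
        else 0 := by
  rw [bp, Polynomial.iterate_derivative_C_mul, Polynomial.eval_mul, Polynomial.eval_C,
    Polynomial.iterate_derivative_mul, Polynomial.eval_finset_sum]
  have hterm : ∀ k ∈ range (j + 1),
      ((j.choose k • (Polynomial.derivative^[j - k] (Polynomial.X ^ i : Polynomial ℝ)
          * Polynomial.derivative^[k] ((1 - Polynomial.X : Polynomial ℝ) ^ (m - i)))).eval 1)
      = if k = m - i then
          ((j.choose (m - i) : ℝ) * (i.descFactorial (j - (m - i)) : ℝ)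
            * ((-1 : ℝ) ^ (m - i) * ((m - i).factorial : ℝ)))
        else 0 := by
    intro k _
    rw [Polynomial.eval_smul, Polynomial.eval_mul,
      Polynomial.iterate_derivative_X_pow_eq_smul, Polynomial.eval_smul,
      Polynomial.eval_pow, Polynomial.eval_X, one_pow, eval1_one_sub_pow]
    rcases eq_or_ne k (m - i) with hk | hk
    · subst hk
      rw [if_pos rfl, if_pos rfl]
      simp [smul_eq_mul]
      ring
    · rw [if_neg hk, if_neg hk]
      simp
  rw [Finset.sum_congr rfl hterm, Finset.sum_ite_eq' (range (j + 1)) (m - i)]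
  rcases le_or_gt (m - i) j with h | h
  · rw [if_pos (Finset.mem_range.2 (by omega)), if_pos h]
    ring
  · rw [if_neg (by simp; omega), if_neg (by omega), mul_zero]

lemma natID (m j h : ℕ) (hh : h ≤ j) (hj : j ≤ m) :
    m.choose (m - j + h) * j.choose (j - h) * (m - j + h).descFactorial h * (j - h).factorial
      = m.descFactorial j * j.choose h := by
  apply Nat.eq_of_mul_eq_mul_right (Nat.factorial_pos (m - j))
  have e1 : (m - j + h).descFactorial h * (m - j).factorial = (m - j + h).factorial := by
    have e2 := Nat.choose_mul_factorial_mul_factorial (Nat.le_add_left h (m - j))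
    rw [show m - j + h - h = m - j from by omega] at e2
    rw [Nat.descFactorial_eq_factorial_mul_choose]
    calc h.factorial * (m - j + h).choose h * (m - j).factorial
        = (m - j + h).choose h * h.factorial * (m - j).factorial := by ring
      _ = (m - j + h).factorial := e2
  have e3 : m.descFactorial j * (m - j).factorial = m.factorial := by
    have e2 := Nat.choose_mul_factorial_mul_factorial hj
    rw [Nat.descFactorial_eq_factorial_mul_choose]
    calc j.factorial * m.choose j * (m - j).factorial
        = m.choose j * j.factorial * (m - j).factorial := by ring
      _ = m.factorial := e2
  have e4 : m.choose (m - j + h) * (m - j + h).factorial * (j - h).factorial = m.factorial := by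
    have e2 := Nat.choose_mul_factorial_mul_factorial (show m - j + h ≤ m from by omega)
    rwa [show m - (m - j + h) = j - h from by omega] at e2
  have e5 : j.choose (j - h) = j.choose h := Nat.choose_symm hh
  calc m.choose (m - j + h) * j.choose (j - h) * (m - j + h).descFactorial h
        * (j - h).factorial * (m - j).factorial
      = m.choose (m - j + h) * ((m - j + h).descFactorial h * (m - j).factorial)
        * (j - h).factorial * j.choose (j - h) := by ring
    _ = m.choose (m - j + h) * (m - j + h).factorial * (j - h).factorial * j.choose h := by
        rw [e1, e5]
    _ = m.factorial * j.choose h := by rw [e4]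
    _ = m.descFactorial j * (m - j).factorial * j.choose h := by rw [e3]
    _ = m.descFactorial j * j.choose h * (m - j).factorial := by ring

/-- Main evaluation: `j`-th derivative of a Bézier curve at `1`. -/
lemma main_eval (d m j : ℕ) (hj : j ≤ m) (q : ℕ → EuclideanSpace ℝ (Fin d)) :
    iteratedDeriv j (fun u : ℝ => ∑ i ∈ range (m + 1), bern m i u • q i) 1
      = (m.descFactorial j : ℝ) • fdiffE d j q (m - j) := by
  have hfun : (fun u : ℝ => ∑ i ∈ range (m + 1), bern m i u • q i)
      = fun u : ℝ => ∑ i ∈ range (m + 1), (bp m i).eval u • q i := by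
    funext u
    exact Finset.sum_congr rfl fun i _ => by rw [bern_eq]
  rw [hfun, iteratedDeriv_poly_sum]
  show ∑ i ∈ range (m + 1), ((Polynomial.derivative^[j] (bp m i)).eval 1) • q i
      = (m.descFactorial j : ℝ) • fdiffE d j q (m - j)
  -- only indices i ≥ m - j contribute
  have hsub : Finset.image (fun h => m - j + h) (range (j + 1)) ⊆ range (m + 1) := by
    intro x hx
    simp only [Finset.mem_image, Finset.mem_range] at hx ⊢
    obtain ⟨h, hh, rfl⟩ := hx
    omega
  have hzero : ∀ i ∈ range (m + 1), i ∉ Finset.image (fun h => m - j + h) (range (j + 1)) →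
      ((Polynomial.derivative^[j] (bp m i)).eval 1) • q i = 0 := by
    intro i hi hni
    simp only [Finset.mem_image, Finset.mem_range] at hi hni
    have hilt : i < m - j := by
      by_contra hc
      exact hni ⟨i - (m - j), by omega, by omega⟩
    rw [eval1_bp, if_neg (by omega), zero_smul]
  rw [← Finset.sum_subset hsub hzero, Finset.sum_image (by intro a _ b _ hab; simp only at hab; omega)]
  rw [fdiffE_eq_sum, Finset.smul_sum]
  refine Finset.sum_congr rfl fun h hh => ?_
  simp only [Finset.mem_range] at hh
  have hh' : h ≤ j := by omega
  rw [eval1_bp, if_pos (by omega)]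
  rw [show m - (m - j + h) = j - h from by omega, show j - (j - h) = h from by omega]
  rw [smul_smul]
  congr 1
  have := natID m j h hh' hj
  have hcast : (m.choose (m - j + h) : ℝ) * (j.choose (j - h) : ℝ)
      * ((m - j + h).descFactorial h : ℝ) * ((j - h).factorial : ℝ)
      = (m.descFactorial j : ℝ) * (j.choose h : ℝ) := by
    exact_mod_cast congrArg (fun x : ℕ => (x : ℝ)) this
  calc (m.choose (m - j + h) : ℝ) * (j.choose (j - h) : ℝ)
        * ((m - j + h).descFactorial h : ℝ)
        * ((-1 : ℝ) ^ (j - h) * ((j - h).factorial : ℝ))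
      = ((m.choose (m - j + h) : ℝ) * (j.choose (j - h) : ℝ)
          * ((m - j + h).descFactorial h : ℝ) * ((j - h).factorial : ℝ))
        * (-1 : ℝ) ^ (j - h) := by ring
    _ = ((m.descFactorial j : ℝ) * (j.choose h : ℝ)) * (-1 : ℝ) ^ (j - h) := by rw [hcast]
    _ = (m.descFactorial j : ℝ) * ((-1 : ℝ) ^ (j - h) * (j.choose h : ℝ)) := by ring

theorem constraints_at_one_iff (n m r d : ℕ) (hrm : r ≤ m) (hmn : m ≤ n)
    (p q : ℕ → EuclideanSpace ℝ (Fin d)) :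
    (∀ j ≤ r,
        iteratedDeriv j (fun u : ℝ => ∑ i ∈ range (m + 1), bern m i u • q i) 1
          = iteratedDeriv j (fun u : ℝ => ∑ i ∈ range (n + 1), bern n i u • p i) 1) ↔
    (∀ j ≤ r,
        q (m - j) = ((-1 : ℝ) ^ j * (n.choose j : ℝ) * ((m.choose j : ℝ))⁻¹) •
              fdiffE d j p (n - j)
          - ∑ h ∈ Finset.Icc 1 j, ((-1 : ℝ) ^ h * (j.choose h : ℝ)) • q (m - j + h)) := by
  refine forall₂_congr fun j hj => ?_
  have hjm : j ≤ m := le_trans hj hrm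
  have hjn : j ≤ n := le_trans hjm hmn
  set Dq := fdiffE d j q (m - j) with hDq
  set Dp := fdiffE d j p (n - j) with hDp
  have hmd : ((m.descFactorial j : ℝ)) ≠ 0 := by
    have : 0 < m.descFactorial j := by
      rw [Nat.descFactorial_eq_factorial_mul_choose]
      exact Nat.mul_pos (Nat.factorial_pos j) (Nat.choose_pos hjm)
    exact_mod_cast this.ne'
  have hmc : ((m.choose j : ℝ)) ≠ 0 := by
    exact_mod_cast (Nat.choose_pos hjm).ne'
  -- Step 1: rewrite both sides via main_eval
  rw [main_eval d m j hjm q, main_eval d n j hjn p]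
  -- coefficient
  set c : ℝ := (n.choose j : ℝ) * ((m.choose j : ℝ))⁻¹ with hc
  have hstep1 : (m.descFactorial j : ℝ) • Dq = (n.descFactorial j : ℝ) • Dp ↔ Dq = c • Dp := by
    constructor
    · intro hE
      have : Dq = ((m.descFactorial j : ℝ))⁻¹ • ((m.descFactorial j : ℝ) • Dq) := by
        rw [smul_smul, inv_mul_cancel₀ hmd, one_smul]
      rw [this, hE, smul_smul]
      congr 1
      rw [hc, Nat.descFactorial_eq_factorial_mul_choose,
        Nat.descFactorial_eq_factorial_mul_choose]
      push_cast
      field_simp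
    · intro hE
      rw [hE, smul_smul, hc]
      congr 1
      rw [Nat.descFactorial_eq_factorial_mul_choose, Nat.descFactorial_eq_factorial_mul_choose]
      push_cast
      field_simp
  rw [hstep1]
  -- Step 2: expand Dq, and isolate the h = 0 term
  have hins : range (j + 1) = insert 0 (Finset.Icc 1 j) := by
    ext x
    simp only [Finset.mem_range, Finset.mem_insert, Finset.mem_Icc]
    omega
  have hDqexp : Dq = ((-1 : ℝ) ^ j) • q (m - j)
      + ∑ h ∈ Finset.Icc 1 j, ((-1 : ℝ) ^ (j - h) * (j.choose h : ℝ)) • q (m - j + h) := by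
    rw [hDq, fdiffE_eq_sum, hins, Finset.sum_insert (by simp)]
    simp
  rw [hDqexp]
  set T : EuclideanSpace ℝ (Fin d) :=
    ∑ h ∈ Finset.Icc 1 j, ((-1 : ℝ) ^ (j - h) * (j.choose h : ℝ)) • q (m - j + h) with hT
  have hstep2 : ((-1 : ℝ) ^ j) • q (m - j) + T = c • Dp ↔
      ((-1 : ℝ) ^ j) • q (m - j) = c • Dp - T := by
    constructor <;> intro hE
    · rw [← hE]; abel
    · rw [hE]; abel
  rw [hstep2]
  -- Step 3: multiply through by (-1)^j
  have hsq : ((-1 : ℝ) ^ j) * ((-1 : ℝ) ^ j) = 1 := by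
    rw [← pow_add, show j + j = 2 * j from by omega, pow_mul, neg_one_sq, one_pow]
  have hTT : ((-1 : ℝ) ^ j) • T
      = ∑ h ∈ Finset.Icc 1 j, ((-1 : ℝ) ^ h * (j.choose h : ℝ)) • q (m - j + h) := by
    rw [hT, Finset.smul_sum]
    refine Finset.sum_congr rfl fun h hh => ?_
    rw [smul_smul, ← mul_assoc, signMulA j h (Finset.mem_Icc.1 hh).2]
  have hSS : ((-1 : ℝ) ^ j) • (∑ h ∈ Finset.Icc 1 j,
        ((-1 : ℝ) ^ h * (j.choose h : ℝ)) • q (m - j + h)) = T := by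
    rw [hT, Finset.smul_sum]
    refine Finset.sum_congr rfl fun h hh => ?_
    rw [smul_smul, ← mul_assoc, signMulB j h (Finset.mem_Icc.1 hh).2]
  have hco : (-1 : ℝ) ^ j * ((-1 : ℝ) ^ j * (n.choose j : ℝ) * ((m.choose j : ℝ))⁻¹) = c := by
    rw [hc, show (-1 : ℝ) ^ j * ((-1 : ℝ) ^ j * (n.choose j : ℝ) * ((m.choose j : ℝ))⁻¹)
        = ((-1 : ℝ) ^ j * (-1 : ℝ) ^ j) * ((n.choose j : ℝ) * ((m.choose j : ℝ))⁻¹) from by ring,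
      hsq, one_mul]
  constructor
  · intro hE
    have h0 : q (m - j) = ((-1 : ℝ) ^ j) • (((-1 : ℝ) ^ j) • q (m - j)) := by
      rw [smul_smul, hsq, one_smul]
    rw [h0, hE, smul_sub, smul_smul, hTT, hc, ← mul_assoc]
  · intro hE
    rw [hE, smul_sub, smul_smul, hco, hSS]
end
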